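/- On the circle ℝ/ℤ, fix an irrational α ∈ (0,1) and define μ_n = (1/2)δ_0 + (1/2)δ_{α/2^n}. Then each μ_n is strictly aperiodic, but for every n the support of μ_n * μ_{n−1} * … * μ₁ is contained in the image of the interval [0, α] in ℝ/ℤ; in particular, the weak-* limit of μ_n * … * μ₁ (if it exists) is not the Haar (Lebesgue) measure on ℝ/ℤ. -/

import Mathlib

open MeasureTheory Topology Filter Pointwise

noncomputable def wass {X : Type*} [MeasurableSpace X] [PseudoMetricSpace X]
    (ν₁ ν₂ : Measure X) : ℝ :=
  sInf {r | ∃ γ : Measure (X × X), IsProbabilityMeasure γ ∧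
    γ.map Prod.fst = ν₁ ∧ γ.map Prod.snd = ν₂ ∧ r = ∫ p, dist p.1 p.2 ∂γ}

def msupp {X : Type*} [TopologicalSpace X] [MeasurableSpace X] (μ : Measure X) : Set X :=
  {x | ∀ U : Set X, x ∈ U → IsOpen U → 0 < μ U}

noncomputable def mconv {A : Type*} [MeasurableSpace A] [Add A] (μ ν : Measure A) : Measure A :=
  (μ.prod ν).map (fun p => p.1 + p.2)

noncomputable def mconvPow {A : Type*} [MeasurableSpace A] [AddMonoid A]
    (μ : Measure A) : ℕ → Measure A
  | 0 => Measure.dirac 0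
  | n + 1 => mconv μ (mconvPow μ n)

noncomputable def mconvProd {A : Type*} [MeasurableSpace A] [AddMonoid A] :
    List (Measure A) → Measure A
  | [] => Measure.dirac 0
  | μ :: l => mconv μ (mconvProd l)

def StrictlyAperiodic {A : Type*} [MeasurableSpace A] [TopologicalSpace A] [AddGroup A]
    (μ : Measure A) : Prop :=
  closure (AddSubsemigroup.closure
    {x : A | ∃ a ∈ msupp μ, ∃ b ∈ msupp μ, x = a - b} : Set A) = Set.univ

open scoped NNReal ENNReal

noncomputable def μ13 (α : ℝ) (n : ℕ) : Measure (AddCircle (1 : ℝ)) :=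
  (1 / 2 : ℝ≥0∞) • Measure.dirac 0 +
    (1 / 2 : ℝ≥0∞) • Measure.dirac ((α / 2 ^ n : ℝ) : AddCircle (1 : ℝ))

namespace Stmt13Aux

open Set Metric

/-- Density of the subgroup generated by an irrational point of the circle. -/
lemma dense_zmult {β : ℝ} (hβ : Irrational β) :
    Dense ((AddSubgroup.zmultiples ((β : AddCircle (1:ℝ)))) : Set (AddCircle (1:ℝ))) := by
  have hdense : Dense ((AddSubgroup.closure {1, β} : AddSubgroup ℝ) : Set ℝ) := by
    rcases AddSubgroup.dense_or_cyclic (AddSubgroup.closure {1, β}) with h | ⟨a, ha⟩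
    · exact h
    · exfalso
      have h1 : (1:ℝ) ∈ AddSubgroup.closure ({1, β} : Set ℝ) :=
        AddSubgroup.subset_closure (by simp)
      have hb : β ∈ AddSubgroup.closure ({1, β} : Set ℝ) :=
        AddSubgroup.subset_closure (by simp)
      rw [ha, AddSubgroup.mem_closure_singleton] at h1 hb
      obtain ⟨n, hn⟩ := h1
      obtain ⟨m, hm⟩ := hb
      rw [zsmul_eq_mul] at hn hm
      have hn0 : (n:ℝ) ≠ 0 := by
        intro h
        rw [h, zero_mul] at hn
        exact one_ne_zero hn.symm
      apply hβ
      refine ⟨(m : ℚ) / (n : ℚ), ?_⟩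
      push_cast
      rw [div_eq_iff hn0]
      linear_combination (n:ℝ) * hm - (m:ℝ) * hn
  -- project to the circle
  set π : ℝ →+ AddCircle (1:ℝ) := QuotientAddGroup.mk' (AddSubgroup.zmultiples (1:ℝ)) with hπ
  have hπcoe : ∀ x : ℝ, π x = (x : AddCircle (1:ℝ)) := fun x => rfl
  have hcont : Continuous π := AddCircle.continuous_mk' 1
  have hsurj : Function.Surjective π := QuotientAddGroup.mk'_surjective _
  have himg : Dense (π '' ((AddSubgroup.closure {1, β} : AddSubgroup ℝ) : Set ℝ)) :=
    hsurj.denseRange.dense_image hcont hdense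
  have hmapeq : (AddSubgroup.closure ({1, β} : Set ℝ)).map π
      = AddSubgroup.zmultiples ((β : AddCircle (1:ℝ))) := by
    rw [AddMonoidHom.map_closure]
    have himg2 : π '' ({1, β} : Set ℝ) = {(0 : AddCircle (1:ℝ)), (β : AddCircle (1:ℝ))} := by
      rw [Set.image_pair, hπcoe, hπcoe, AddCircle.coe_period]
    rw [himg2]
    apply le_antisymm
    · rw [AddSubgroup.closure_le]
      rintro x (rfl | rfl)
      · exact zero_mem _
      · exact AddSubgroup.mem_zmultiples _
    · intro y hy
      rw [AddSubgroup.mem_zmultiples_iff] at hy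
      obtain ⟨k, rfl⟩ := hy
      exact zsmul_mem (AddSubgroup.subset_closure (by simp)) k
  have : (AddSubgroup.zmultiples ((β : AddCircle (1:ℝ))) : Set (AddCircle (1:ℝ)))
      = π '' ((AddSubgroup.closure {1, β} : AddSubgroup ℝ) : Set ℝ) := by
    rw [← hmapeq, AddSubgroup.coe_map]
  rw [this]
  exact himg

/-- zmultiples of x lie in any subsemigroup containing x and -x. -/
lemma zmultiples_subset_subsemigroup {S : AddSubsemigroup (AddCircle (1:ℝ))}
    {x : AddCircle (1:ℝ)} (hx : x ∈ S) (hx' : -x ∈ S) :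
    ((AddSubgroup.zmultiples x : AddSubgroup (AddCircle (1:ℝ))) : Set (AddCircle (1:ℝ)))
      ⊆ (S : Set (AddCircle (1:ℝ))) := by
  have hnat : ∀ (y : AddCircle (1:ℝ)), y ∈ S → ∀ k : ℕ, (k + 1) • y ∈ S := by
    intro y hy k
    induction k with
    | zero => simpa using hy
    | succ k ih =>
      rw [succ_nsmul]
      exact S.add_mem ih hy
  rintro y hy
  rw [SetLike.mem_coe, AddSubgroup.mem_zmultiples_iff] at hy
  obtain ⟨k, rfl⟩ := hy
  rcases lt_trichotomy k 0 with h | rfl | h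
  · have hk : k • x = ((-k).toNat) • (-x) := by
      rw [← natCast_zsmul, Int.toNat_of_nonneg (by omega), neg_zsmul, zsmul_neg, neg_neg]
    obtain ⟨m, hm⟩ := Nat.exists_eq_add_of_le (by omega : 1 ≤ (-k).toNat)
    rw [hk, hm, Nat.add_comm 1 m]
    exact hnat _ hx' m
  · have : (0 : ℤ) • x = x + -x := by
      rw [zero_zsmul, add_neg_cancel]
    rw [this]
    exact S.add_mem hx hx'
  · have hk : k • x = (k.toNat) • x := by
      rw [← natCast_zsmul, Int.toNat_of_nonneg (by omega)]
    obtain ⟨m, hm⟩ := Nat.exists_eq_add_of_le (by omega : 1 ≤ k.toNat)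
    rw [hk, hm, Nat.add_comm 1 m]
    exact hnat _ hx m

lemma μ13_pos_of_mem (α : ℝ) (n : ℕ) (U : Set (AddCircle (1:ℝ)))
    (h : (0 : AddCircle (1:ℝ)) ∈ U ∨ ((α / 2 ^ n : ℝ) : AddCircle (1:ℝ)) ∈ U) :
    0 < μ13 α n U := by
  have hexp : μ13 α n U = 1/2 * Measure.dirac 0 U
      + 1/2 * Measure.dirac ((α / 2 ^ n : ℝ) : AddCircle (1:ℝ)) U := by
    simp [μ13]
  rcases h with h | h
  · calc (0:ℝ≥0∞) < 1/2 * 1 := by norm_num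
    _ = 1/2 * Measure.dirac 0 U := by rw [Measure.dirac_apply_of_mem h]
    _ ≤ μ13 α n U := by rw [hexp]; exact le_add_right le_rfl
  · calc (0:ℝ≥0∞) < 1/2 * 1 := by norm_num
    _ = 1/2 * Measure.dirac ((α / 2 ^ n : ℝ) : AddCircle (1:ℝ)) U := by
        rw [Measure.dirac_apply_of_mem h]
    _ ≤ μ13 α n U := by rw [hexp]; exact le_add_left le_rfl

lemma part1 (α : ℝ) (hα : Irrational α) (n : ℕ) : StrictlyAperiodic (μ13 α n) := by
  set x : AddCircle (1:ℝ) := ((α / 2 ^ n : ℝ) : AddCircle (1:ℝ)) with hxdef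
  have hirr : Irrational (α / 2 ^ n) := by
    have : (2:ℝ) ^ n = ((2 ^ n : ℕ) : ℝ) := by push_cast; ring
    rw [this]
    exact hα.div_natCast (pow_ne_zero n two_ne_zero)
  have h0mem : (0 : AddCircle (1:ℝ)) ∈ msupp (μ13 α n) := by
    intro U hU hUo
    exact μ13_pos_of_mem α n U (Or.inl hU)
  have hxmem : x ∈ msupp (μ13 α n) := by
    intro U hU hUo
    exact μ13_pos_of_mem α n U (Or.inr hU)
  set D : Set (AddCircle (1:ℝ)) :=
    {y | ∃ a ∈ msupp (μ13 α n), ∃ b ∈ msupp (μ13 α n), y = a - b} with hD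
  have hxD : x ∈ D := ⟨x, hxmem, 0, h0mem, by rw [sub_zero]⟩
  have hxD' : -x ∈ D := ⟨0, h0mem, x, hxmem, by rw [zero_sub]⟩
  have hsub : ((AddSubgroup.zmultiples x : AddSubgroup (AddCircle (1:ℝ)))
      : Set (AddCircle (1:ℝ))) ⊆ (AddSubsemigroup.closure D : Set (AddCircle (1:ℝ))) :=
    zmultiples_subset_subsemigroup (AddSubsemigroup.subset_closure hxD)
      (AddSubsemigroup.subset_closure hxD')
  have hdense : Dense (AddSubsemigroup.closure D : Set (AddCircle (1:ℝ))) :=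
    (dense_zmult hirr).mono hsub
  exact hdense.closure_eq

/-! ### Part 2 -/

def Kset (α : ℝ) (m : ℕ) : Set (AddCircle (1:ℝ)) :=
  (fun x : ℝ => (x : AddCircle (1 : ℝ))) '' Set.Icc 0 (α / 2 ^ m)

lemma Kset_closed (α : ℝ) (m : ℕ) : IsClosed (Kset α m) :=
  (isCompact_Icc.image (AddCircle.continuous_mk' 1)).isClosed

lemma Kset_meas (α : ℝ) (m : ℕ) : MeasurableSet (Kset α m) :=
  (Kset_closed α m).measurableSet

instance μ13_prob (α : ℝ) (n : ℕ) : IsProbabilityMeasure (μ13 α n) := by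
  constructor
  simp only [μ13, Measure.add_apply, Measure.smul_apply, smul_eq_mul, measure_univ, mul_one]
  exact ENNReal.add_halves 1

lemma mconv_prob {A : Type*} [MeasurableSpace A] [Add A] [MeasurableAdd₂ A]
    (μ ν : Measure A) [IsProbabilityMeasure μ] [IsProbabilityMeasure ν] :
    IsProbabilityMeasure (mconv μ ν) := by
  constructor
  rw [mconv, Measure.map_apply measurable_add MeasurableSet.univ]
  simp

lemma mconvProd_prob {A : Type*} [MeasurableSpace A] [AddMonoid A] [MeasurableAdd₂ A]
    (l : List (Measure A)) (h : ∀ μ ∈ l, IsProbabilityMeasure μ) :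
    IsProbabilityMeasure (mconvProd l) := by
  induction l with
  | nil =>
    simp only [mconvProd]
    infer_instance
  | cons μ l ih =>
    simp only [mconvProd]
    haveI := h μ (by simp)
    haveI := ih (fun ν hν => h ν (by simp [hν]))
    exact mconv_prob _ _

lemma mconv_null {μ ν : Measure (AddCircle (1:ℝ))} [IsProbabilityMeasure μ]
    [IsProbabilityMeasure ν]
    {A B K : Set (AddCircle (1:ℝ))} (hK : MeasurableSet K) (hA : MeasurableSet A)
    (hB : MeasurableSet B)
    (hμ : μ Aᶜ = 0) (hν : ν Bᶜ = 0) (hsum : ∀ a ∈ A, ∀ b ∈ B, a + b ∈ K) :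
    mconv μ ν Kᶜ = 0 := by
  rw [mconv, Measure.map_apply measurable_add hK.compl]
  have hsub : (fun p : AddCircle (1:ℝ) × AddCircle (1:ℝ) => p.1 + p.2) ⁻¹' Kᶜ
      ⊆ (Aᶜ ×ˢ (univ : Set (AddCircle (1:ℝ)))) ∪ ((univ : Set (AddCircle (1:ℝ))) ×ˢ Bᶜ) := by
    intro p hp
    rcases em (p.1 ∈ A) with h1 | h1
    · rcases em (p.2 ∈ B) with h2 | h2
      · exact absurd (hsum _ h1 _ h2) hp
      · exact Or.inr ⟨trivial, h2⟩
    · exact Or.inl ⟨h1, trivial⟩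
  refine le_antisymm ?_ zero_le
  calc (μ.prod ν) ((fun p : AddCircle (1:ℝ) × AddCircle (1:ℝ) => p.1 + p.2) ⁻¹' Kᶜ)
      ≤ (μ.prod ν) ((Aᶜ ×ˢ univ) ∪ (univ ×ˢ Bᶜ)) := measure_mono hsub
    _ ≤ (μ.prod ν) (Aᶜ ×ˢ univ) + (μ.prod ν) (univ ×ˢ Bᶜ) := measure_union_le _ _
    _ = 0 := by rw [Measure.prod_prod, Measure.prod_prod, hμ, hν]; simp

lemma μ13_null (α : ℝ) (hα0 : 0 ≤ α) (n : ℕ) : μ13 α n (Kset α n)ᶜ = 0 := by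
  have h0 : (0 : AddCircle (1:ℝ)) ∈ Kset α n :=
    ⟨0, ⟨le_refl _, by positivity⟩, rfl⟩
  have hx : ((α / 2 ^ n : ℝ) : AddCircle (1:ℝ)) ∈ Kset α n :=
    ⟨α / 2 ^ n, ⟨by positivity, le_refl _⟩, rfl⟩
  simp [μ13, Measure.dirac_apply, Set.indicator, h0, hx]

lemma prod_null (α : ℝ) (hα0 : 0 ≤ α) : ∀ n m : ℕ,
    (mconvProd (List.ofFn fun i : Fin n => μ13 α (i + m + 1))) (Kset α m)ᶜ = 0 := by
  intro n
  induction n with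
  | zero =>
    intro m
    have h0 : (0 : AddCircle (1:ℝ)) ∈ Kset α m :=
      ⟨0, ⟨le_refl _, by positivity⟩, rfl⟩
    simp only [List.ofFn_zero, mconvProd]
    rw [Measure.dirac_apply]
    simp [Set.indicator, h0]
  | succ n ih =>
    intro m
    rw [List.ofFn_succ]
    have hfun : (fun i : Fin n => μ13 α ((Fin.succ i : Fin (n+1)) + m + 1))
        = fun i : Fin n => μ13 α (i + (m + 1) + 1) := by
      funext i
      congr 1
      simp [Fin.val_succ]
      omega
    have hhead : μ13 α ((0 : Fin (n+1)) + m + 1) = μ13 α (m + 1) := by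
      congr 1
      simp
    simp only [mconvProd, hfun, hhead]
    haveI : IsProbabilityMeasure (mconvProd (List.ofFn fun i : Fin n => μ13 α (i + (m+1) + 1))) := by
      apply mconvProd_prob
      intro μ hμ
      rw [List.mem_ofFn] at hμ
      obtain ⟨i, rfl⟩ := hμ
      infer_instance
    apply mconv_null (Kset_meas α m) (Kset_meas α (m+1)) (Kset_meas α (m+1))
    · exact μ13_null α hα0 (m+1)
    · exact ih (m+1)
    · rintro a ⟨s, hs, rfl⟩ b ⟨t, ht, rfl⟩
      refine ⟨s + t, ⟨add_nonneg hs.1 ht.1, ?_⟩, (by norm_cast : ((s + t : ℝ) : AddCircle (1:ℝ)) = (s : AddCircle (1:ℝ)) + (t : AddCircle (1:ℝ)))⟩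
      calc s + t ≤ α / 2 ^ (m+1) + α / 2 ^ (m+1) := add_le_add hs.2 ht.2
        _ = α / 2 ^ m := by rw [pow_succ]; field_simp; ring

lemma Kset_zero (α : ℝ) :
    Kset α 0 = (fun x : ℝ => (x : AddCircle (1 : ℝ))) '' Set.Icc 0 α := by
  simp [Kset]

lemma part2 (α : ℝ) (hα0 : 0 ≤ α) (n : ℕ) :
    msupp (mconvProd (List.ofFn fun i : Fin n => μ13 α (i + 1))) ⊆
      (fun x : ℝ => (x : AddCircle (1 : ℝ))) '' Set.Icc 0 α := by
  intro x hx
  by_contra hxK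
  have hnull : (mconvProd (List.ofFn fun i : Fin n => μ13 α (i + 1)))
      ((fun x : ℝ => (x : AddCircle (1 : ℝ))) '' Set.Icc 0 α)ᶜ = 0 := by
    rw [← Kset_zero α]
    exact prod_null α hα0 n 0
  have hopen : IsOpen ((fun x : ℝ => (x : AddCircle (1 : ℝ))) '' Set.Icc 0 α)ᶜ := by
    rw [← Kset_zero α]
    exact (Kset_closed α 0).isOpen_compl
  have := hx _ hxK hopen
  rw [hnull] at this
  exact lt_irrefl 0 this

/-! ### Part 3 -/

lemma outside_point (α : ℝ) (hα0 : 0 < α) (hα1 : α < 1) :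
    (((α + 1) / 2 : ℝ) : AddCircle (1:ℝ)) ∉
      (fun x : ℝ => (x : AddCircle (1 : ℝ))) '' Set.Icc 0 α := by
  rintro ⟨s, hs, heq⟩
  have h0 : (((α + 1) / 2 - s : ℝ) : AddCircle (1:ℝ)) = 0 := by
    rw [sub_eq_add_neg, AddCircle.coe_add, ← heq]
    simp
  rw [AddCircle.coe_eq_zero_iff] at h0
  obtain ⟨k, hk⟩ := h0
  rw [zsmul_eq_mul, mul_one] at hk
  have h1 : (0:ℝ) < (k:ℝ) := by
    rw [hk]
    have : s ≤ α := hs.2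
    linarith
  have h2 : (k:ℝ) < 1 := by
    rw [hk]
    have : 0 ≤ s := hs.1
    linarith
  have h1' : (0:ℤ) < k := by exact_mod_cast h1
  have h2' : (k:ℤ) < 1 := by exact_mod_cast h2
  omega

end Stmt13Aux

theorem stmt13 (α : ℝ) (hα : Irrational α) (hα0 : 0 < α) (hα1 : α < 1) :
    (∀ n : ℕ, 1 ≤ n → StrictlyAperiodic (μ13 α n)) ∧
    (∀ n : ℕ, msupp (mconvProd (List.ofFn fun i : Fin n => μ13 α (i + 1))) ⊆
        (fun x : ℝ => (x : AddCircle (1 : ℝ))) '' Set.Icc 0 α) ∧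
    ∀ ν : Measure (AddCircle (1 : ℝ)),
      (∀ φ : C(AddCircle (1 : ℝ), ℝ),
        Tendsto (fun n : ℕ =>
            ∫ x, φ x ∂(mconvProd (List.ofFn fun i : Fin n => μ13 α (i + 1))))
          atTop (𝓝 (∫ x, φ x ∂ν))) →
      ν ≠ volume := by
  classical
  refine ⟨fun n _ => Stmt13Aux.part1 α hα n, Stmt13Aux.part2 α hα0.le, ?_⟩
  intro ν hν hνeq
  subst hνeq
  set K : Set (AddCircle (1:ℝ)) := (fun x : ℝ => (x : AddCircle (1 : ℝ))) '' Set.Icc 0 α with hK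
  have hKclosed : IsClosed K := by
    rw [hK, ← Stmt13Aux.Kset_zero α]
    exact Stmt13Aux.Kset_closed α 0
  have hKne : K.Nonempty := ⟨(0 : AddCircle (1:ℝ)), 0, ⟨le_refl _, hα0.le⟩, rfl⟩
  set φ : C(AddCircle (1:ℝ), ℝ) := ⟨fun x => Metric.infDist x K, Metric.continuous_infDist_pt K⟩
    with hφ
  have hzero : ∀ n : ℕ,
      ∫ x, φ x ∂(mconvProd (List.ofFn fun i : Fin n => μ13 α (i + 1))) = 0 := by
    intro n
    apply integral_eq_zero_of_ae
    have hnull : (mconvProd (List.ofFn fun i : Fin n => μ13 α (i + 1))) Kᶜ = 0 := by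
      rw [hK, ← Stmt13Aux.Kset_zero α]
      exact Stmt13Aux.prod_null α hα0.le n 0
    have hae : ∀ᵐ x ∂(mconvProd (List.ofFn fun i : Fin n => μ13 α (i + 1))), x ∈ K := by
      rw [MeasureTheory.ae_iff]
      exact hnull
    filter_upwards [hae] with x hx
    simpa [hφ] using Metric.infDist_zero_of_mem hx
  have hlim : Tendsto (fun n : ℕ =>
      ∫ x, φ x ∂(mconvProd (List.ofFn fun i : Fin n => μ13 α (i + 1))))
      atTop (𝓝 0) := by
    simp only [hzero]
    exact tendsto_const_nhds
  have heq0 : ∫ x, φ x ∂(volume : Measure (AddCircle (1:ℝ))) = 0 :=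
    tendsto_nhds_unique (hν φ) hlim
  have hpos : 0 < ∫ x, φ x ∂(volume : Measure (AddCircle (1:ℝ))) := by
    have hnn : 0 ≤ fun x => φ x := fun x => Metric.infDist_nonneg
    have hint : Integrable (fun x => φ x) (volume : Measure (AddCircle (1:ℝ))) := by
      apply φ.continuous.integrable_of_hasCompactSupport
      exact (isClosed_tsupport _).isCompact
    rw [MeasureTheory.integral_pos_iff_support_of_nonneg hnn hint]
    have hKc : Kᶜ ⊆ Function.support fun x => φ x := by
      intro y hy
      have := (hKclosed.notMem_iff_infDist_pos hKne).mp hy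
      simpa [hφ, Function.mem_support] using this.ne'
    have hKcopen : IsOpen Kᶜ := hKclosed.isOpen_compl
    have hy : (((α + 1) / 2 : ℝ) : AddCircle (1:ℝ)) ∈ Kᶜ :=
      Stmt13Aux.outside_point α hα0 hα1
    calc (0:ℝ≥0∞) < volume Kᶜ := hKcopen.measure_pos volume ⟨_, hy⟩
      _ ≤ volume (Function.support fun x => φ x) := measure_mono hKc
  rw [heq0] at hpos
  exact lt_irrefl 0 hpos
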